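/- The alternating binomial differences of the logarithm, f̂_n = Σ_{k=1}^n C(n,k) (-1)^k log k, satisfy f̂_n = log log n + O(1) as n → ∞. -/

import Mathlib

open Filter Asymptotics Finset
open MeasureTheory Real Set


lemma frullani (k : ℕ) (hk : 1 ≤ k) :
    ∫ t in Ioo (0:ℝ) 1, (1 - t ^ (k - 1 : ℕ)) / (-Real.log t) = Real.log k := by
  have hk1 : (1:ℝ) ≤ (k:ℝ) := by exact_mod_cast hk
  set μ := volume.restrict (Ioc (1:ℝ) k) with hμ
  set ν := volume.restrict (Ioc (0:ℝ) 1) with hν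
  have hνfin : IsFiniteMeasure ν := by
    constructor; rw [hν, Measure.restrict_apply_univ]; simp [Real.volume_Ioc]
  have hμfin : IsFiniteMeasure μ := by
    constructor; rw [hμ, Measure.restrict_apply_univ]; simp [Real.volume_Ioc]
  have hmeas : Measurable (fun p : ℝ × ℝ => p.2 ^ (p.1 - 1) : ℝ × ℝ → ℝ) :=
    measurable_snd.pow (measurable_fst.sub measurable_const)
  have hint : Integrable (Function.uncurry fun s t : ℝ => t ^ (s - 1)) (μ.prod ν) := by
    refine ⟨hmeas.aestronglyMeasurable, ?_⟩
    apply HasFiniteIntegral.of_bounded (C := 1)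
    rw [hμ, hν, Measure.prod_restrict]
    refine (ae_restrict_iff' (measurableSet_Ioc.prod measurableSet_Ioc)).2 (.of_forall ?_)
    rintro ⟨s, t⟩ ⟨hs, ht⟩
    simp only [Function.uncurry, norm_eq_abs]
    rw [abs_of_nonneg (rpow_nonneg ht.1.le _)]
    exact rpow_le_one ht.1.le ht.2 (by linarith [hs.1])
  have hswap := integral_integral_swap hint
  have hL : (∫ s, ∫ t, t ^ (s-1) ∂ν ∂μ) = Real.log k := by
    rw [hμ, hν]
    have h1 : ∀ s ∈ Ioc (1:ℝ) k, (∫ t in Ioc (0:ℝ) 1, t ^ (s-1)) = 1/s := by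
      intro s hs
      rw [← intervalIntegral.integral_of_le zero_le_one,
        integral_rpow (Or.inl (by linarith [hs.1]))]
      rw [Real.one_rpow, Real.zero_rpow (by linarith [hs.1])]
      ring_nf
    rw [setIntegral_congr_fun measurableSet_Ioc h1, ← intervalIntegral.integral_of_le hk1,
      integral_one_div (by intro h; rw [Set.mem_uIcc] at h; rcases h with ⟨h,_⟩|⟨_,h⟩ <;> linarith)]
    rw [div_one]
  have hR : (∫ t, ∫ s, t ^ (s-1) ∂μ ∂ν) = ∫ t in Ioo (0:ℝ) 1, (1 - t ^ (k - 1 : ℕ)) / (-Real.log t) := by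
    rw [hν, integral_Ioc_eq_integral_Ioo]
    refine setIntegral_congr_fun measurableSet_Ioo ?_
    intro t ht
    have hlt : Real.log t < 0 := Real.log_neg ht.1 ht.2
    have hlog : Real.log t ≠ 0 := ne_of_lt hlt
    have hderiv : ∀ s ∈ Set.uIcc (1:ℝ) k, HasDerivAt (fun s => t ^ (s-1) / Real.log t) (t ^ (s-1)) s := by
      intro s _
      have h1 : HasDerivAt (fun s : ℝ => t ^ (s-1)) (t ^ (s-1) * Real.log t) s := by
        have := (hasStrictDerivAt_const_rpow ht.1 (s-1)).hasDerivAt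
        have h2 := this.comp s ((hasDerivAt_id s).sub_const 1)
        simpa [Function.comp_def] using h2
      simpa [mul_div_assoc, mul_div_cancel_right₀ _ hlog] using h1.div_const (Real.log t)
    have hcont : Continuous fun s : ℝ => t ^ (s-1) :=
      Continuous.rpow continuous_const (continuous_id.sub continuous_const)
        (fun _ => Or.inl (ne_of_gt ht.1))
    simp only [hμ]
    rw [← intervalIntegral.integral_of_le hk1,
      intervalIntegral.integral_eq_sub_of_hasDerivAt hderiv
        (hcont.intervalIntegrable 1 (k:ℝ))]
    have : ((k:ℝ) - 1) = ((k - 1 : ℕ) : ℝ) := by push_cast [Nat.cast_sub hk]; ring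
    rw [this, Real.rpow_natCast]
    simp only [sub_self, Real.rpow_zero]
    rw [div_neg]; ring
  rw [← hR, ← hswap, hL]

-- bounded measurable on Ioo 0 1 is integrable
lemma integrableOn_of_bdd {f : ℝ → ℝ} (hf : Measurable f) (C : ℝ)
    (h : ∀ t ∈ Ioo (0:ℝ) 1, |f t| ≤ C) : IntegrableOn f (Ioo (0:ℝ) 1) := by
  refine ⟨hf.aestronglyMeasurable, ?_⟩
  apply HasFiniteIntegral.of_bounded (C := C)
  exact (ae_restrict_iff' measurableSet_Ioo).2 (.of_forall h)

lemma aux_le (m : ℕ) {t : ℝ} (ht : t ∈ Ioo (0:ℝ) 1) :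
    0 ≤ (1 - t ^ m) / (-Real.log t) ∧ (1 - t ^ m) / (-Real.log t) ≤ m := by
  have hlt : Real.log t < 0 := Real.log_neg ht.1 ht.2
  have hpos : 0 < -Real.log t := by linarith
  have h1 : 1 - t ^ m ≤ m * (1 - t) := by
    have := geom_sum_mul t m
    have hsum : (∑ i ∈ range m, t ^ i) ≤ m := by
      calc (∑ i ∈ range m, t ^ i) ≤ ∑ i ∈ range m, 1 :=
            Finset.sum_le_sum fun i _ => pow_le_one₀ ht.1.le ht.2.le
        _ = m := by simp
    nlinarith [pow_le_one₀ ht.1.le ht.2.le (n := m), ht.1.le, sub_nonneg.2 ht.2.le]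
  have h2 : 1 - t ≤ -Real.log t := by
    have := Real.log_le_sub_one_of_pos ht.1
    linarith
  constructor
  · apply div_nonneg _ hpos.le
    have := pow_le_one₀ ht.1.le ht.2.le (n := m); linarith
  · rw [div_le_iff₀ hpos]
    calc 1 - t ^ m ≤ m * (1 - t) := h1
      _ ≤ m * (-Real.log t) := by
          apply mul_le_mul_of_nonneg_left h2 (Nat.cast_nonneg m)

lemma integrableOn_aux (m : ℕ) :
    IntegrableOn (fun t => (1 - t ^ m) / (-Real.log t)) (Ioo (0:ℝ) 1) := by
  apply integrableOn_of_bdd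
  · exact (measurable_const.sub (measurable_id.pow_const m)).div Real.measurable_log.neg
  · intro t ht
    obtain ⟨h0, h1⟩ := aux_le m ht
    rw [abs_of_nonneg h0]; exact h1

lemma binom_sum_id (n : ℕ) (hn : 1 ≤ n) {t : ℝ} (ht : t ∈ Ioo (0:ℝ) 1) :
    ∑ k ∈ Finset.Icc 1 n, (n.choose k : ℝ) * (-1) ^ k * (1 - t ^ (k - 1 : ℕ))
      = ((1 - t) - (1 - t) ^ n) / t := by
  have ht0 : t ≠ 0 := ne_of_gt ht.1
  have hins : Finset.range (n+1) = insert 0 (Finset.Icc 1 n) := by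
    ext k; simp [Finset.mem_range, Finset.mem_Icc]; omega
  have hbin : ∀ u : ℝ, (1 - u) ^ n = ∑ k ∈ Finset.range (n+1), (n.choose k : ℝ) * (-u) ^ k := by
    intro u
    rw [sub_eq_add_neg, add_comm, add_pow]
    refine Finset.sum_congr rfl fun k hk => ?_
    rw [one_pow, mul_one]; ring
  have hzero : ∑ k ∈ Finset.Icc 1 n, (n.choose k : ℝ) * (-1) ^ k = -1 := by
    have := hbin 1
    rw [hins, Finset.sum_insert (by simp)] at this
    simp only [sub_self, zero_pow (by omega : n ≠ 0), Nat.choose_zero_right] at this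
    simp only [Nat.cast_one, pow_zero, one_mul] at this
    have h2 : ∑ k ∈ Finset.Icc 1 n, (n.choose k : ℝ) * (-1:ℝ) ^ k
        = ∑ k ∈ Finset.Icc 1 n, (n.choose k : ℝ) * (-1:ℝ) ^ k := rfl
    linarith [this]
  have hpow : ∑ k ∈ Finset.Icc 1 n, (n.choose k : ℝ) * (-1) ^ k * t ^ (k-1:ℕ)
      = ((1 - t) ^ n - 1) / t := by
    rw [eq_div_iff ht0, Finset.sum_mul]
    have : ∀ k ∈ Finset.Icc 1 n, (n.choose k : ℝ) * (-1) ^ k * t ^ (k-1:ℕ) * t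
        = (n.choose k : ℝ) * (-t) ^ k := by
      intro k hk
      rw [Finset.mem_Icc] at hk
      have htk : t ^ (k-1:ℕ) * t = t ^ k := by rw [← pow_succ, Nat.sub_add_cancel hk.1]
      rw [neg_pow t k, ← htk]; ring
    rw [Finset.sum_congr rfl this]
    have := hbin t
    rw [hins, Finset.sum_insert (by simp)] at this
    simp only [pow_zero, Nat.choose_zero_right, Nat.cast_one, one_mul] at this
    linarith [this]
  have : ∑ k ∈ Finset.Icc 1 n, (n.choose k : ℝ) * (-1) ^ k * (1 - t ^ (k-1:ℕ))
      = (∑ k ∈ Finset.Icc 1 n, (n.choose k : ℝ) * (-1) ^ k)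
        - ∑ k ∈ Finset.Icc 1 n, (n.choose k : ℝ) * (-1) ^ k * t ^ (k-1:ℕ) := by
    rw [← Finset.sum_sub_distrib]
    exact Finset.sum_congr rfl fun k _ => by ring
  rw [this, hzero, hpow]
  field_simp
  ring

lemma Sn_eq (n : ℕ) (hn : 1 ≤ n) :
    ∑ k ∈ Finset.Icc 1 n, (n.choose k : ℝ) * (-1) ^ k * Real.log k
      = ∫ t in Ioo (0:ℝ) 1, ((1 - t) - (1 - t) ^ n) / (t * (-Real.log t)) := by
  have h1 : ∀ k ∈ Finset.Icc 1 n, (n.choose k : ℝ) * (-1) ^ k * Real.log k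
      = ∫ t in Ioo (0:ℝ) 1,
          (n.choose k : ℝ) * (-1) ^ k * ((1 - t ^ (k - 1 : ℕ)) / (-Real.log t)) := by
    intro k hk; rw [Finset.mem_Icc] at hk
    rw [integral_const_mul, frullani k hk.1]
  rw [Finset.sum_congr rfl h1, ← integral_finset_sum]
  · apply setIntegral_congr_fun measurableSet_Ioo
    intro t ht
    have hlt : Real.log t < 0 := Real.log_neg ht.1 ht.2
    have hlog : -Real.log t ≠ 0 := ne_of_gt (by linarith)
    simp only
    have : ∀ k, (n.choose k : ℝ) * (-1) ^ k * ((1 - t ^ (k - 1 : ℕ)) / (-Real.log t))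
        = ((n.choose k : ℝ) * (-1) ^ k * (1 - t ^ (k - 1 : ℕ))) / (-Real.log t) := by
      intro k; ring
    simp only [this]
    rw [← Finset.sum_div, binom_sum_id n hn ht, div_div]
  · intro k hk
    exact (integrableOn_aux (k - 1)).const_mul _

lemma exp_le_n {n : ℕ} (hn : 3 ≤ n) : Real.exp 1 ≤ (n:ℝ) := by
  have h3 : (3:ℝ) ≤ (n:ℝ) := by exact_mod_cast hn
  have := Real.exp_one_lt_d9
  linarith

lemma a_le_b {n : ℕ} (hn : 3 ≤ n) : 1/(n:ℝ) ≤ Real.exp (-1) := by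
  have hn0 : (0:ℝ) < n := by positivity
  rw [Real.exp_neg, one_div]
  exact inv_anti₀ (Real.exp_pos 1) (exp_le_n hn)

lemma hasDerivAt_negloglog {t : ℝ} (ht0 : 0 < t) (ht1 : t < 1) :
    HasDerivAt (fun t => -Real.log (-Real.log t)) (1 / (t * (-Real.log t))) t := by
  have hlt : Real.log t < 0 := Real.log_neg ht0 ht1
  have h1 : HasDerivAt (fun t : ℝ => -Real.log t) (-(t⁻¹)) t :=
    (Real.hasDerivAt_log (ne_of_gt ht0)).neg
  have h2 := (Real.hasDerivAt_log (x := -Real.log t) (by linarith)).comp t h1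
  have h3 := h2.neg
  refine h3.congr_deriv ?_
  ring

lemma contOn_h {s : Set ℝ} (hs : s ⊆ Ioo (0:ℝ) 1) :
    ContinuousOn (fun t => 1 / (t * (-Real.log t))) s := by
  apply ContinuousOn.div continuousOn_const
  · exact continuousOn_id.mul ((Real.continuousOn_log.mono (fun t ht => by
      have := hs ht; exact ne_of_gt this.1)).neg)
  · intro t ht
    have h := hs ht
    have hlt : Real.log t < 0 := Real.log_neg h.1 h.2
    have : 0 < t * (-Real.log t) := mul_pos h.1 (by linarith)
    exact ne_of_gt this

lemma ftc_loglog (n : ℕ) (hn : 3 ≤ n) :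
    ∫ t in (1/(n:ℝ))..(Real.exp (-1)), 1 / (t * (-Real.log t)) = Real.log (Real.log n) := by
  have hn0 : (0:ℝ) < n := by positivity
  have ha0 : (0:ℝ) < 1/(n:ℝ) := by positivity
  have he1 : Real.exp (-1) < 1 := by rw [Real.exp_lt_one_iff]; norm_num
  have hab := a_le_b hn
  have hsub : Set.uIcc (1/(n:ℝ)) (Real.exp (-1)) ⊆ Ioo (0:ℝ) 1 := by
    rw [Set.uIcc_of_le hab]
    intro t ht
    exact ⟨lt_of_lt_of_le ha0 ht.1, lt_of_le_of_lt ht.2 he1⟩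
  rw [intervalIntegral.integral_eq_sub_of_hasDerivAt
    (fun t ht => hasDerivAt_negloglog (hsub ht).1 (hsub ht).2)
    ((contOn_h hsub).intervalIntegrable)]
  rw [Real.log_exp, Real.log_div one_ne_zero (ne_of_gt hn0), Real.log_one]
  norm_num

noncomputable def gfun (n : ℕ) (t : ℝ) : ℝ := ((1 - t) - (1 - t) ^ n) / (t * (-Real.log t))

lemma g_bounds (n : ℕ) (hn : 1 ≤ n) {t : ℝ} (ht : t ∈ Icc (0:ℝ) 1) :
    0 ≤ gfun n t ∧ gfun n t ≤ n := by
  have hn0 : (0:ℝ) ≤ n := Nat.cast_nonneg n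
  rcases eq_or_lt_of_le ht.1 with h0 | h0
  · simp [gfun, ← h0, one_pow]
  rcases eq_or_lt_of_le ht.2 with h1 | h1
  · simp [gfun, h1, zero_pow (by omega : n ≠ 0)]
  -- 0 < t < 1
  have hlt : Real.log t < 0 := Real.log_neg h0 h1
  have hL : 0 < -Real.log t := by linarith
  have hD : 0 < t * (-Real.log t) := mul_pos h0 hL
  have hu0 : (0:ℝ) ≤ 1 - t := by linarith
  have hu1 : 1 - t ≤ 1 := by linarith
  have hN0 : 0 ≤ (1 - t) - (1 - t) ^ n := by
    have := pow_le_pow_of_le_one hu0 hu1 hn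
    simpa using this
  have hlog1 : 1 - t ≤ -Real.log t := by
    have := Real.log_le_sub_one_of_pos h0; linarith
  constructor
  · exact div_nonneg hN0 hD.le
  · rw [gfun, div_le_iff₀ hD]
    have hfac : (1 - t) - (1 - t) ^ n = (1 - t) * (1 - (1 - t) ^ (n - 1)) := by
      have h : (1 - t) ^ n = (1 - t) ^ (n - 1) * (1 - t) := by
        conv_lhs => rw [← Nat.sub_add_cancel hn]
        rw [pow_succ]
      rw [h]; ring
    have hbern : 1 - (1 - t) ^ (n - 1) ≤ (n - 1 : ℕ) * t := by
      have := one_add_mul_le_pow (a := -t) (by linarith) (n - 1)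
      have h' : 1 + (n - 1 : ℕ) * (-t) ≤ (1 - t) ^ (n - 1) := by
        calc (1:ℝ) + (n-1:ℕ) * (-t) = 1 + (n-1:ℕ) * (-t) := rfl
          _ ≤ (1 + (-t)) ^ (n-1) := this
          _ = (1 - t) ^ (n-1) := by ring_nf
      linarith
    have hcast : ((n - 1 : ℕ) : ℝ) ≤ (n : ℝ) := by
      have : (n - 1 : ℕ) ≤ n := Nat.sub_le n 1
      exact_mod_cast this
    calc (1 - t) - (1 - t) ^ n = (1 - t) * (1 - (1 - t) ^ (n - 1)) := hfac
      _ ≤ (1 - t) * ((n - 1 : ℕ) * t) := by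
          apply mul_le_mul_of_nonneg_left hbern hu0
      _ ≤ (-Real.log t) * ((n - 1 : ℕ) * t) := by
          apply mul_le_mul_of_nonneg_right hlog1
          positivity
      _ ≤ (-Real.log t) * ((n : ℝ) * t) := by
          apply mul_le_mul_of_nonneg_left _ hL.le
          apply mul_le_mul_of_nonneg_right hcast h0.le
      _ = (n : ℝ) * (t * (-Real.log t)) := by ring

lemma integrableOn_g (n : ℕ) (hn : 1 ≤ n) : IntegrableOn (gfun n) (Ioc (0:ℝ) 1) := by
  refine ⟨?_, ?_⟩
  · apply Measurable.aestronglyMeasurable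
    exact ((measurable_const.sub measurable_id).sub
      ((measurable_const.sub measurable_id).pow_const n)).div
      (measurable_id.mul Real.measurable_log.neg)
  · apply HasFiniteIntegral.of_bounded (C := (n:ℝ))
    refine (ae_restrict_iff' measurableSet_Ioc).2 (.of_forall ?_)
    intro t ht
    obtain ⟨hg0, hg1⟩ := g_bounds n hn ⟨ht.1.le, ht.2⟩
    rw [Real.norm_eq_abs, abs_of_nonneg hg0]; exact hg1

lemma gfun_intInt (n : ℕ) (hn : 1 ≤ n) {x y : ℝ} (hx : 0 ≤ x) (hxy : x ≤ y) (hy : y ≤ 1) :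
    IntervalIntegrable (gfun n) volume x y := by
  rw [intervalIntegrable_iff]
  apply (integrableOn_g n hn).mono_set
  rw [Set.uIoc_of_le hxy]
  intro t ht; exact ⟨lt_of_le_of_lt hx ht.1, le_trans ht.2 hy⟩

lemma bound1 (n : ℕ) (hn : 3 ≤ n) : |∫ t in (0:ℝ)..(1/(n:ℝ)), gfun n t| ≤ 1 := by
  have hn1 : 1 ≤ n := by omega
  have hnR : (3:ℝ) ≤ (n:ℝ) := by exact_mod_cast hn
  have ha0 : (0:ℝ) ≤ 1/(n:ℝ) := by positivity
  have ha1 : 1/(n:ℝ) ≤ 1 := by rw [div_le_one (by linarith)]; linarith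
  have hmem : ∀ u ∈ Icc (0:ℝ) (1/(n:ℝ)), u ∈ Icc (0:ℝ) 1 :=
    fun u hu => ⟨hu.1, le_trans hu.2 ha1⟩
  have h0 : 0 ≤ ∫ t in (0:ℝ)..(1/(n:ℝ)), gfun n t :=
    intervalIntegral.integral_nonneg ha0 (fun u hu => (g_bounds n hn1 (hmem u hu)).1)
  rw [abs_of_nonneg h0]
  calc (∫ t in (0:ℝ)..(1/(n:ℝ)), gfun n t)
      ≤ ∫ _ in (0:ℝ)..(1/(n:ℝ)), (n:ℝ) :=
        intervalIntegral.integral_mono_on ha0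
          (gfun_intInt n hn1 le_rfl ha0 ha1) intervalIntegrable_const
          (fun u hu => (g_bounds n hn1 (hmem u hu)).2)
    _ = (1/(n:ℝ) - 0) * n := by rw [intervalIntegral.integral_const]; simp [smul_eq_mul]
    _ = 1 := by field_simp; simp

lemma exp_one_le_three : Real.exp 1 ≤ 3 :=
  le_of_lt (lt_trans Real.exp_one_lt_d9 (by norm_num))

lemma g_le_three (n : ℕ) (hn : 1 ≤ n) {t : ℝ} (ht : t ∈ Icc (Real.exp (-1)) 1) :
    gfun n t ≤ 3 := by
  rcases eq_or_lt_of_le ht.2 with h1 | h1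
  · rw [h1]; simp [gfun, zero_pow (by omega : n ≠ 0)]
  have hb0 : (0:ℝ) < Real.exp (-1) := Real.exp_pos _
  have ht0 : 0 < t := lt_of_lt_of_le hb0 ht.1
  have hlt : Real.log t < 0 := Real.log_neg ht0 h1
  have hL : 0 < -Real.log t := by linarith
  have hD : 0 < t * (-Real.log t) := mul_pos ht0 hL
  have h3t : (1:ℝ) ≤ 3 * t := by
    have h1' : (1:ℝ) ≤ 3 * Real.exp (-1) := by
      rw [Real.exp_neg]
      have hp := Real.exp_pos 1
      have hc : Real.exp 1 * (Real.exp 1)⁻¹ = 1 := mul_inv_cancel₀ (ne_of_gt hp)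
      nlinarith [exp_one_le_three]
    nlinarith [ht.1]
  have hlog1 : 1 - t ≤ -Real.log t := by
    have := Real.log_le_sub_one_of_pos ht0; linarith
  rw [gfun, div_le_iff₀ hD]
  have hpow : 0 ≤ (1 - t) ^ n := pow_nonneg (by linarith) n
  calc (1 - t) - (1 - t) ^ n ≤ 1 - t := by linarith
    _ ≤ -Real.log t := hlog1
    _ = 1 * (-Real.log t) := (one_mul _).symm
    _ ≤ (3 * t) * (-Real.log t) := by
        apply mul_le_mul_of_nonneg_right h3t hL.le
    _ = 3 * (t * (-Real.log t)) := by ring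

lemma bound3 (n : ℕ) (hn : 3 ≤ n) : |∫ t in (Real.exp (-1))..(1:ℝ), gfun n t| ≤ 3 := by
  have hn1 : 1 ≤ n := by omega
  have hb0 : (0:ℝ) < Real.exp (-1) := Real.exp_pos _
  have hb1 : Real.exp (-1) ≤ 1 := by rw [Real.exp_le_one_iff]; norm_num
  have hmem : ∀ u ∈ Icc (Real.exp (-1)) (1:ℝ), u ∈ Icc (0:ℝ) 1 :=
    fun u hu => ⟨le_trans hb0.le hu.1, hu.2⟩
  have h0 : 0 ≤ ∫ t in (Real.exp (-1))..(1:ℝ), gfun n t :=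
    intervalIntegral.integral_nonneg hb1 (fun u hu => (g_bounds n hn1 (hmem u hu)).1)
  rw [abs_of_nonneg h0]
  calc (∫ t in (Real.exp (-1))..(1:ℝ), gfun n t)
      ≤ ∫ _ in (Real.exp (-1))..(1:ℝ), (3:ℝ) :=
        intervalIntegral.integral_mono_on hb1
          (gfun_intInt n hn1 hb0.le hb1 le_rfl) intervalIntegrable_const
          (fun u hu => g_le_three n hn1 hu)
    _ = (1 - Real.exp (-1)) * 3 := by rw [intervalIntegral.integral_const]; simp [smul_eq_mul]
    _ ≤ 3 := by nlinarith [hb0]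

lemma bound2 (n : ℕ) (hn : 3 ≤ n) :
    |(∫ t in (1/(n:ℝ))..(Real.exp (-1)), gfun n t) - Real.log (Real.log n)| ≤ 2 := by
  have hn1 : 1 ≤ n := by omega
  have hnR : (3:ℝ) ≤ (n:ℝ) := by exact_mod_cast hn
  set a := 1/(n:ℝ) with ha
  set b := Real.exp (-1) with hb
  have ha0 : (0:ℝ) < a := by rw [ha]; positivity
  have hab : a ≤ b := a_le_b hn
  have hb1 : b < 1 := by rw [hb, Real.exp_lt_one_iff]; norm_num
  have hsub : Set.uIcc a b ⊆ Ioo (0:ℝ) 1 := by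
    rw [Set.uIcc_of_le hab]
    intro t ht
    exact ⟨lt_of_lt_of_le ha0 ht.1, lt_of_le_of_lt ht.2 hb1⟩
  -- facts for t ∈ Icc a b
  have hfacts : ∀ t ∈ Icc a b, 0 < t ∧ t < 1 ∧ 1 ≤ -Real.log t ∧ 1 ≤ (n:ℝ) * t := by
    intro t ht
    have ht0 : 0 < t := lt_of_lt_of_le ha0 ht.1
    have ht1 : t < 1 := lt_of_le_of_lt ht.2 hb1
    have hL1 : 1 ≤ -Real.log t := by
      have : Real.log t ≤ -1 := by
        rw [Real.log_le_iff_le_exp ht0]; exact ht.2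
      linarith
    have hnt : 1 ≤ (n:ℝ) * t := by
      have := ht.1
      rw [ha, div_le_iff₀ (by linarith : (0:ℝ) < (n:ℝ))] at this
      linarith [this]
    exact ⟨ht0, ht1, hL1, hnt⟩
  have hdiff : ∀ t ∈ Icc a b,
      1/(t * (-Real.log t)) - gfun n t = (t + (1-t)^n) / (t * (-Real.log t)) := by
    intro t ht
    rw [gfun, div_sub_div_same]
    congr 1
    ring
  have hptwise : ∀ t ∈ Icc a b,
      0 ≤ (t + (1-t)^n) / (t * (-Real.log t)) ∧
      (t + (1-t)^n) / (t * (-Real.log t)) ≤ 1 + (n:ℝ) * (1-t)^n := by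
    intro t ht
    obtain ⟨ht0, ht1, hL1, hnt⟩ := hfacts t ht
    have hL0 : 0 < -Real.log t := by linarith
    have hD : 0 < t * (-Real.log t) := mul_pos ht0 hL0
    have hP : 0 ≤ (1-t)^n := pow_nonneg (by linarith) n
    constructor
    · exact div_nonneg (by linarith) hD.le
    · rw [div_le_iff₀ hD]
      have h1 : t ≤ t * (-Real.log t) := by nlinarith
      have h2 : (1-t)^n ≤ (1-t)^n * ((n:ℝ) * (t * (-Real.log t))) := by
        nlinarith [mul_le_mul_of_nonneg_left hL1 (by linarith : (0:ℝ) ≤ (n:ℝ)*t)]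
      nlinarith
  have hint_h : IntervalIntegrable (fun t => 1/(t * (-Real.log t))) volume a b :=
    (contOn_h hsub).intervalIntegrable
  have hint_g : IntervalIntegrable (gfun n) volume a b :=
    gfun_intInt n hn1 ha0.le hab hb1.le
  have hint_ub : IntervalIntegrable (fun t : ℝ => 1 + (n:ℝ) * (1-t)^n) volume a b :=
    (continuous_const.add (continuous_const.mul
      ((continuous_const.sub continuous_id).pow n))).intervalIntegrable a b
  have hD0 : 0 ≤ ∫ t in a..b, (1/(t * (-Real.log t)) - gfun n t) := by
    apply intervalIntegral.integral_nonneg hab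
    intro u hu
    rw [hdiff u hu]
    exact (hptwise u hu).1
  have hDle : (∫ t in a..b, (1/(t * (-Real.log t)) - gfun n t))
      ≤ ∫ t in a..b, (1 + (n:ℝ) * (1-t)^n) := by
    apply intervalIntegral.integral_mono_on hab (hint_h.sub hint_g) hint_ub
    intro u hu
    rw [hdiff u hu]
    exact (hptwise u hu).2
  have hC : (∫ t in a..b, (1 + (n:ℝ) * (1-t)^n)) ≤ 2 := by
    have hderiv : ∀ t ∈ Set.uIcc a b,
        HasDerivAt (fun t : ℝ => t - (n:ℝ)/(n+1) * (1-t)^(n+1))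
          (1 + (n:ℝ) * (1-t)^n) t := by
      intro t _
      have hp : HasDerivAt (fun t : ℝ => (1-t)^(n+1))
          (((n+1:ℕ):ℝ) * (1-t)^n * (-1)) t := by
        have h0 : HasDerivAt (fun t : ℝ => 1 - t) (-1) t := (hasDerivAt_id t).const_sub 1
        have := h0.pow (n+1)
        simpa [Pi.pow_def] using this
      have := (hasDerivAt_id t).sub (hp.const_mul ((n:ℝ)/(n+1)))
      refine this.congr_deriv ?_
      have hne : ((n:ℝ)+1) ≠ 0 := by positivity
      push_cast
      linear_combination ((1-t)^n) * (div_mul_cancel₀ (n:ℝ) hne)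
    rw [intervalIntegral.integral_eq_sub_of_hasDerivAt hderiv hint_ub]
    have h1a : 0 ≤ 1 - a := by
      rw [ha]
      have : 1/(n:ℝ) ≤ 1 := by rw [div_le_one (by linarith)]; linarith
      linarith
    have h1a' : 1 - a ≤ 1 := by linarith
    have hpa : (1-a)^(n+1) ≤ 1 := pow_le_one₀ h1a h1a'
    have hpb : 0 ≤ (1-b)^(n+1) := pow_nonneg (by linarith) (n+1)
    have hcle : (n:ℝ)/(n+1) ≤ 1 := by
      rw [div_le_one (by positivity)]; linarith
    have hc0 : (0:ℝ) ≤ (n:ℝ)/(n+1) := by positivity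
    have hb0 : 0 < b := Real.exp_pos _
    nlinarith [mul_le_mul_of_nonneg_left hpa hc0]
  have hsplit : (∫ t in a..b, (1/(t * (-Real.log t)) - gfun n t))
      = Real.log (Real.log n) - ∫ t in a..b, gfun n t := by
    rw [intervalIntegral.integral_sub hint_h hint_g, ftc_loglog n hn]
  rw [abs_sub_comm]
  rw [abs_of_nonneg (by linarith [hsplit ▸ hD0])]
  linarith [hsplit ▸ hDle, hsplit ▸ hD0]

lemma main_est (n : ℕ) (hn : 3 ≤ n) :
    |(∑ k ∈ Finset.Icc 1 n, (n.choose k : ℝ) * (-1) ^ k * Real.log k)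
      - Real.log (Real.log n)| ≤ 6 := by
  have hn1 : 1 ≤ n := by omega
  have hnR : (3:ℝ) ≤ (n:ℝ) := by exact_mod_cast hn
  set a := 1/(n:ℝ) with ha
  set b := Real.exp (-1) with hb
  have ha0 : (0:ℝ) ≤ a := by rw [ha]; positivity
  have hab : a ≤ b := a_le_b hn
  have hb1 : b ≤ 1 := by rw [hb, Real.exp_le_one_iff]; norm_num
  have ha1 : a ≤ 1 := le_trans hab hb1
  have e1 : (∑ k ∈ Finset.Icc 1 n, (n.choose k : ℝ) * (-1) ^ k * Real.log k)
      = ∫ t in (0:ℝ)..1, gfun n t := by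
    rw [Sn_eq n hn1, intervalIntegral.integral_of_le zero_le_one,
      integral_Ioc_eq_integral_Ioo]
    rfl
  have i1 : IntervalIntegrable (gfun n) volume 0 a := gfun_intInt n hn1 le_rfl ha0 ha1
  have i2 : IntervalIntegrable (gfun n) volume a b := gfun_intInt n hn1 ha0 hab hb1
  have i3 : IntervalIntegrable (gfun n) volume b 1 :=
    gfun_intInt n hn1 (le_trans ha0 hab) hb1 le_rfl
  have h12 := intervalIntegral.integral_add_adjacent_intervals i1 i2
  have i12 : IntervalIntegrable (gfun n) volume 0 b := gfun_intInt n hn1 le_rfl (le_trans ha0 hab) hb1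
  have h123 := intervalIntegral.integral_add_adjacent_intervals i12 i3
  have hB1 := bound1 n hn
  have hB2 := bound2 n hn
  have hB3 := bound3 n hn
  rw [e1, ← h123, ← h12]
  rw [← hb] at hB2 hB3
  have habs : |(∫ t in (0:ℝ)..a, gfun n t) + (∫ t in a..b, gfun n t)
        + (∫ t in b..(1:ℝ), gfun n t) - Real.log (Real.log n)|
      ≤ |∫ t in (0:ℝ)..a, gfun n t| + |(∫ t in a..b, gfun n t) - Real.log (Real.log n)|
        + |∫ t in b..(1:ℝ), gfun n t| := by
    have := abs_add_le ((∫ t in (0:ℝ)..a, gfun n t)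
      + ((∫ t in a..b, gfun n t) - Real.log (Real.log n))) (∫ t in b..(1:ℝ), gfun n t)
    have h2 := abs_add_le (∫ t in (0:ℝ)..a, gfun n t)
      ((∫ t in a..b, gfun n t) - Real.log (Real.log n))
    calc |(∫ t in (0:ℝ)..a, gfun n t) + (∫ t in a..b, gfun n t)
          + (∫ t in b..(1:ℝ), gfun n t) - Real.log (Real.log n)|
        = |((∫ t in (0:ℝ)..a, gfun n t)
          + ((∫ t in a..b, gfun n t) - Real.log (Real.log n)))
          + (∫ t in b..(1:ℝ), gfun n t)| := by ring_nf
      _ ≤ _ := by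
          refine le_trans this ?_
          linarith
  linarith

/-- The alternating binomial differences of the logarithm satisfy
`∑_{k=1}^n C(n,k)(-1)^k log k = log log n + O(1)`. -/
theorem binomial_differences_log :
    (fun n : ℕ => (∑ k ∈ Finset.Icc 1 n, (n.choose k : ℝ) * (-1) ^ k * Real.log k)
        - Real.log (Real.log n)) =O[atTop] fun _ : ℕ => (1 : ℝ) := by
  rw [Asymptotics.isBigO_iff]
  refine ⟨6, ?_⟩
  filter_upwards [Filter.eventually_ge_atTop 3] with n hn
  simp only [norm_one, mul_one, Real.norm_eq_abs]
  exact main_est n hn
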